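/- For all a, b ∈ ℝ, r ≥ 2 and k ≥ 0, setting a_k = max{−k, min{a, k}} and b_k = max{−k, min{b, k}}, one has (4(r−1)/r²)·(|a_k|^{r/2} − |b_k|^{r/2})² ≤ (a−b)·(a_k|a_k|^{r−2} − b_k|b_k|^{r−2}). -/

import Mathlib

open Real intervalIntegral Filter

lemma contAbsRpow {s : ℝ} (hs : 0 ≤ s) : Continuous fun t : ℝ => |t| ^ s :=
  (Real.continuous_rpow_const hs).comp continuous_abs

lemma hasDerivAt_phi {r : ℝ} (hr : 2 ≤ r) (t : ℝ) :
    HasDerivAt (fun t : ℝ => t * |t| ^ (r - 2)) ((r - 1) * |t| ^ (r - 2)) t := by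
  rcases lt_trichotomy t 0 with ht | rfl | ht
  · have hout : HasDerivAt (fun u : ℝ => u ^ (r - 1)) ((r - 1) * (-t) ^ (r - 2)) (-t) := by
      have := Real.hasDerivAt_rpow_const (x := -t) (p := r - 1) (Or.inl (by linarith))
      simpa [show r - 1 - 1 = r - 2 by ring] using this
    have hcomp : HasDerivAt (fun s : ℝ => -((-s) ^ (r - 1)))
        ((r - 1) * (-t) ^ (r - 2)) t := by
      have := (hout.comp t (hasDerivAt_neg t)).neg
      simpa [Function.comp_def, Pi.neg_def] using this
    have heq : (fun s : ℝ => s * |s| ^ (r - 2)) =ᶠ[nhds t] fun s => -((-s) ^ (r - 1)) := by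
      filter_upwards [eventually_lt_nhds ht] with s hs
      have hpos : (0 : ℝ) < -s := by linarith
      rw [abs_of_neg hs, show r - 1 = 1 + (r - 2) by ring, Real.rpow_add hpos,
        Real.rpow_one]
      ring
    have := hcomp.congr_of_eventuallyEq heq
    rwa [abs_of_neg ht]
  · rw [hasDerivAt_iff_tendsto_slope]
    have hval : |(0:ℝ)| ^ (r - 2) = (r - 1) * |(0:ℝ)| ^ (r - 2) := by
      rcases eq_or_lt_of_le hr with h | h
      · rw [← h]; norm_num
      · rw [abs_zero, Real.zero_rpow (by linarith)]; ring
    have hc : Tendsto (fun s : ℝ => |s| ^ (r - 2)) (nhdsWithin 0 {(0:ℝ)}ᶜ)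
        (nhds ((r - 1) * |(0:ℝ)| ^ (r - 2))) := by
      rw [← hval]
      exact ((contAbsRpow (by linarith)).continuousAt).tendsto.mono_left nhdsWithin_le_nhds
    refine hc.congr' ?_
    filter_upwards [self_mem_nhdsWithin] with s hs
    have hs' : s ≠ 0 := hs
    rw [slope_def_field]
    field_simp
    simp
  · have hout : HasDerivAt (fun u : ℝ => u ^ (r - 1)) ((r - 1) * t ^ (r - 2)) t := by
      have := Real.hasDerivAt_rpow_const (x := t) (p := r - 1) (Or.inl (by linarith))
      simpa [show r - 1 - 1 = r - 2 by ring] using this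
    have heq : (fun s : ℝ => s * |s| ^ (r - 2)) =ᶠ[nhds t] fun s => s ^ (r - 1) := by
      filter_upwards [eventually_gt_nhds ht] with s hs
      rw [abs_of_pos hs, show r - 1 = 1 + (r - 2) by ring, Real.rpow_add hs, Real.rpow_one]
    have := hout.congr_of_eventuallyEq heq
    rwa [abs_of_pos ht]

lemma phi_sub {r : ℝ} (hr : 2 ≤ r) (y x : ℝ) :
    x * |x| ^ (r - 2) - y * |y| ^ (r - 2) = (r - 1) * ∫ t in y..x, |t| ^ (r - 2) := by
  have h := intervalIntegral.integral_eq_sub_of_hasDerivAt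
    (f := fun t : ℝ => t * |t| ^ (r - 2)) (f' := fun t => (r - 1) * |t| ^ (r - 2))
    (fun t _ => hasDerivAt_phi hr t)
    ((continuous_const.mul (contAbsRpow (by linarith : (0:ℝ) ≤ r - 2))).intervalIntegrable y x)
  rw [intervalIntegral.integral_const_mul] at h
  rw [← h]

lemma int_abs_rpow {p : ℝ} (hp : 0 < p) {u v : ℝ} (hu : 0 ≤ u) (huv : u ≤ v) :
    ∫ t in u..v, |t| ^ (p - 1) = (v ^ p - u ^ p) / p := by
  have hcongr : ∫ t in u..v, |t| ^ (p - 1) = ∫ t in u..v, t ^ (p - 1) := by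
    apply intervalIntegral.integral_congr
    intro t ht
    rw [Set.uIcc_of_le huv] at ht
    show |t| ^ (p - 1) = t ^ (p - 1)
    rw [abs_of_nonneg (le_trans hu ht.1)]
  rw [hcongr, integral_rpow (Or.inl (by linarith))]
  rw [show p - 1 + 1 = p by ring]

lemma psi_bound {p : ℝ} (hp : 1 ≤ p) {y x : ℝ} (hxy : y ≤ x) :
    |(|x| ^ p - |y| ^ p)| ≤ p * ∫ t in y..x, |t| ^ (p - 1) := by
  have hp0 : 0 < p := by linarith
  have hneg : ∀ c d : ℝ, ∫ t in c..d, |t| ^ (p - 1) = ∫ t in -d..-c, |t| ^ (p - 1) := by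
    intro c d
    rw [← intervalIntegral.integral_comp_neg (fun t => |t| ^ (p - 1))]
    simp
  rcases le_or_gt 0 y with hy | hy
  · have hx0 : 0 ≤ x := le_trans hy hxy
    have hm : y ^ p ≤ x ^ p := Real.rpow_le_rpow hy hxy hp0.le
    rw [int_abs_rpow hp0 hy hxy, abs_of_nonneg hx0, abs_of_nonneg hy,
      abs_of_nonneg (by linarith : (0:ℝ) ≤ x ^ p - y ^ p),
      mul_div_cancel₀ _ hp0.ne']
  · rcases le_or_gt x 0 with hx | hx
    · have hm : (-x) ^ p ≤ (-y) ^ p :=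
        Real.rpow_le_rpow (by linarith) (by linarith) hp0.le
      rw [hneg, int_abs_rpow hp0 (by linarith : (0:ℝ) ≤ -x) (by linarith),
        abs_of_nonpos hx, abs_of_nonpos hy.le,
        abs_of_nonpos (by linarith : (-x) ^ p - (-y) ^ p ≤ 0),
        mul_div_cancel₀ _ hp0.ne']
      linarith
    · have hsplit : (∫ t in y..(0:ℝ), |t| ^ (p - 1)) + ∫ t in (0:ℝ)..x, |t| ^ (p - 1)
          = ∫ t in y..x, |t| ^ (p - 1) := by
        apply intervalIntegral.integral_add_adjacent_intervals <;>
          exact (contAbsRpow (by linarith)).intervalIntegrable _ _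
      have h1 : ∫ t in y..(0:ℝ), |t| ^ (p - 1) = (-y) ^ p / p := by
        rw [hneg, neg_zero, int_abs_rpow hp0 le_rfl (by linarith), Real.zero_rpow hp0.ne']
        ring
      have h2 : ∫ t in (0:ℝ)..x, |t| ^ (p - 1) = x ^ p / p := by
        rw [int_abs_rpow hp0 le_rfl hx.le, Real.zero_rpow hp0.ne']
        ring
      have hxp : 0 ≤ x ^ p := Real.rpow_nonneg hx.le p
      have hyp : 0 ≤ (-y) ^ p := Real.rpow_nonneg (by linarith) p
      have key : p * ((-y) ^ p / p + x ^ p / p) = (-y) ^ p + x ^ p := by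
        field_simp
      rw [← hsplit, h1, h2, abs_of_pos hx, abs_of_neg hy, key, abs_le]
      constructor <;> linarith

lemma cs_integral {f : ℝ → ℝ} (hf : Continuous f) {y x : ℝ} (hxy : y ≤ x) :
    (∫ t in y..x, f t) ^ 2 ≤ (x - y) * ∫ t in y..x, (f t) ^ 2 := by
  rcases eq_or_lt_of_le hxy with rfl | hlt
  · simp
  · have hd : 0 < x - y := by linarith
    obtain ⟨c, hdc⟩ : ∃ c : ℝ, (x - y) * c = ∫ t in y..x, f t :=
      ⟨(∫ t in y..x, f t) / (x - y), by field_simp⟩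
    have key : 0 ≤ ∫ t in y..x, (f t - c) ^ 2 :=
      intervalIntegral.integral_nonneg hxy (fun t _ => sq_nonneg _)
    have hexp : (fun t => (f t - c) ^ 2) = fun t => (f t) ^ 2 - (2 * c) * f t + c ^ 2 := by
      funext t; ring
    rw [hexp, intervalIntegral.integral_add (f := fun t => f t ^ 2 - 2 * c * f t)
        (g := fun _ => c ^ 2) (((hf.pow 2).intervalIntegrable y x).sub
        ((continuous_const.mul hf).intervalIntegrable y x))
        (intervalIntegrable_const),
      intervalIntegral.integral_sub (f := fun t => f t ^ 2) (g := fun t => 2 * c * f t)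
        ((hf.pow 2).intervalIntegrable y x)
        ((continuous_const.mul hf).intervalIntegrable y x),
      intervalIntegral.integral_const_mul, intervalIntegral.integral_const,
      smul_eq_mul] at key
    have hmul : 0 ≤ (x - y) * (((∫ t in y..x, (f t) ^ 2) - 2 * c * ∫ t in y..x, f t)
        + (x - y) * c ^ 2) := mul_nonneg hd.le key
    have expand : (x - y) * (((∫ t in y..x, (f t) ^ 2) - 2 * c * ∫ t in y..x, f t)
        + (x - y) * c ^ 2)
        = (x - y) * (∫ t in y..x, (f t) ^ 2) - 2 * (∫ t in y..x, f t) * ((x - y) * c)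
          + ((x - y) * c) ^ 2 := by ring
    rw [expand, hdc] at hmul
    nlinarith [hmul]

lemma core_ineq {r : ℝ} (hr : 2 ≤ r) {y x : ℝ} (hxy : y ≤ x) :
    4 * (r - 1) / r ^ 2 * (|x| ^ (r / 2) - |y| ^ (r / 2)) ^ 2
      ≤ (x - y) * (x * |x| ^ (r - 2) - y * |y| ^ (r - 2)) := by
  have hrpos : (0:ℝ) < r := by linarith
  set I1 : ℝ := ∫ t in y..x, |t| ^ (r - 2) with hI1
  set I2 : ℝ := ∫ t in y..x, |t| ^ (r / 2 - 1) with hI2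
  have h1 : x * |x| ^ (r - 2) - y * |y| ^ (r - 2) = (r - 1) * I1 := phi_sub hr y x
  have h2 : |(|x| ^ (r / 2) - |y| ^ (r / 2))| ≤ (r / 2) * I2 :=
    psi_bound (by linarith) hxy
  have hsq : ∀ t : ℝ, (|t| ^ (r / 2 - 1)) ^ 2 = |t| ^ (r - 2) := by
    intro t
    rw [← Real.rpow_natCast (|t| ^ (r / 2 - 1)) 2, ← Real.rpow_mul (abs_nonneg t)]
    norm_num
    ring_nf
  have h3 : I2 ^ 2 ≤ (x - y) * I1 := by
    have := cs_integral (contAbsRpow (by linarith : (0:ℝ) ≤ r / 2 - 1)) hxy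
    rw [hI1, hI2]
    convert this using 2
    exact intervalIntegral.integral_congr fun t _ => (hsq t).symm
  have h2' : (|x| ^ (r / 2) - |y| ^ (r / 2)) ^ 2 ≤ (r / 2) ^ 2 * I2 ^ 2 := by
    have hI2nonneg : 0 ≤ I2 :=
      intervalIntegral.integral_nonneg hxy fun t _ => Real.rpow_nonneg (abs_nonneg t) _
    nlinarith [sq_abs (|x| ^ (r / 2) - |y| ^ (r / 2)), abs_nonneg (|x| ^ (r / 2) - |y| ^ (r / 2))]
  have hcoef : 4 * (r - 1) / r ^ 2 * ((r / 2) ^ 2) = r - 1 := by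
    field_simp
    ring
  calc 4 * (r - 1) / r ^ 2 * (|x| ^ (r / 2) - |y| ^ (r / 2)) ^ 2
      ≤ 4 * (r - 1) / r ^ 2 * ((r / 2) ^ 2 * I2 ^ 2) := by
        apply mul_le_mul_of_nonneg_left h2'
        apply div_nonneg (by linarith) (by positivity)
    _ = (r - 1) * I2 ^ 2 := by rw [← mul_assoc, hcoef]
    _ ≤ (r - 1) * ((x - y) * I1) := mul_le_mul_of_nonneg_left h3 (by linarith)
    _ = (x - y) * ((r - 1) * I1) := by ring
    _ = (x - y) * (x * |x| ^ (r - 2) - y * |y| ^ (r - 2)) := by rw [h1]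

lemma phi_mono {r : ℝ} (hr : 2 ≤ r) {y x : ℝ} (h : y ≤ x) :
    y * |y| ^ (r - 2) ≤ x * |x| ^ (r - 2) := by
  have h1 := phi_sub hr y x
  have h2 : 0 ≤ ∫ t in y..x, |t| ^ (r - 2) :=
    intervalIntegral.integral_nonneg h fun t _ => Real.rpow_nonneg (abs_nonneg t) _
  nlinarith

lemma key_ineq (r k : ℝ) (hr : 2 ≤ r) (hk : 0 ≤ k) {a b : ℝ} (hba : b ≤ a) :
    (4 * (r - 1) / r ^ 2) *
        (|max (-k) (min a k)| ^ (r / 2) - |max (-k) (min b k)| ^ (r / 2)) ^ 2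
      ≤ (a - b) *
          (max (-k) (min a k) * |max (-k) (min a k)| ^ (r - 2)
            - max (-k) (min b k) * |max (-k) (min b k)| ^ (r - 2)) := by
  set A := max (-k) (min a k) with hA
  set B := max (-k) (min b k) with hB
  have hT : B ≤ A := max_le_max le_rfl (min_le_min hba le_rfl)
  have hlip : A - B ≤ a - b := by
    have h1 : |A - B| ≤ |min a k - min b k| := by
      rw [hA, hB, max_comm (-k) (min a k), max_comm (-k) (min b k)]
      exact abs_max_sub_max_le_abs _ _ _
    have h2 : |min a k - min b k| ≤ |a - b| := by
      simpa using abs_min_sub_min_le_max a k b k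
    calc A - B ≤ |A - B| := le_abs_self _
      _ ≤ |a - b| := h1.trans h2
      _ = a - b := abs_of_nonneg (by linarith)
  have hphi : 0 ≤ A * |A| ^ (r - 2) - B * |B| ^ (r - 2) := by
    have := phi_mono hr hT
    linarith
  calc (4 * (r - 1) / r ^ 2) * (|A| ^ (r / 2) - |B| ^ (r / 2)) ^ 2
      ≤ (A - B) * (A * |A| ^ (r - 2) - B * |B| ^ (r - 2)) := core_ineq hr hT
    _ ≤ (a - b) * (A * |A| ^ (r - 2) - B * |B| ^ (r - 2)) :=
        mul_le_mul_of_nonneg_right hlip hphi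

/-- Lemma lemch2: for all `a b ∈ ℝ`, `r ≥ 2`, `k ≥ 0`, with
`a_k = max{−k, min{a,k}}` and `b_k = max{−k, min{b,k}}`, one has
`(4(r−1)/r²)(|a_k|^{r/2} − |b_k|^{r/2})² ≤ (a−b)(a_k|a_k|^{r−2} − b_k|b_k|^{r−2})`. -/
theorem statement_5 (a b r k : ℝ) (hr : 2 ≤ r) (hk : 0 ≤ k) :
    (4 * (r - 1) / r ^ 2) *
        (|max (-k) (min a k)| ^ (r / 2) - |max (-k) (min b k)| ^ (r / 2)) ^ 2
      ≤ (a - b) *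
          (max (-k) (min a k) * |max (-k) (min a k)| ^ (r - 2)
            - max (-k) (min b k) * |max (-k) (min b k)| ^ (r - 2)) := by
  rcases le_total b a with h | h
  · exact key_ineq r k hr hk h
  · have hsym := key_ineq r k hr hk h
    have e : (|max (-k) (min a k)| ^ (r / 2) - |max (-k) (min b k)| ^ (r / 2)) ^ 2
        = (|max (-k) (min b k)| ^ (r / 2) - |max (-k) (min a k)| ^ (r / 2)) ^ 2 := by ring
    have e2 : (a - b) *
          (max (-k) (min a k) * |max (-k) (min a k)| ^ (r - 2)
            - max (-k) (min b k) * |max (-k) (min b k)| ^ (r - 2))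
        = (b - a) *
          (max (-k) (min b k) * |max (-k) (min b k)| ^ (r - 2)
            - max (-k) (min a k) * |max (-k) (min a k)| ^ (r - 2)) := by ring
    rw [e, e2]
    exact hsym
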